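/- Let G and G' be finite groups of equal order and let π ∈ bij(G,G'). Then D^π = (1/|G|) ∑_{g∈G'} P^{π(g)⁻¹} · P^π · P^g, where P^{π(g)⁻¹} denotes P^{τ_{π(g)⁻¹}} (a G × G matrix) and P^g denotes P^{τ_g} (a G' × G' matrix). -/

import Mathlib

open scoped BigOperators Classical

/-- A winning correlation for the `(G,G')`-bijection game: nonnegative values,
the outputs sum to one for each pair of inputs, and the value is zero whenever
exactly one of `b = d` and `a = c` holds. -/
def IsWinningCorrelation {G G' : Type*} [Group G] [Group G'] [Fintype G] [Fintype G']
    (p : G → G → G' → G' → ℝ) : Prop :=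
  (∀ (b d : G) (a c : G'), 0 ≤ p b d a c) ∧
  (∀ a c : G', (∑ b : G, ∑ d : G, p b d a c) = 1) ∧
  (∀ (b d : G) (a c : G'), ¬(b = d ↔ a = c) → p b d a c = 0)

/-- Membership in `B̂(G,G')`: a winning correlation whose sum over all pairs of
inputs is `1` for every pair of outputs. -/
def MemBhat {G G' : Type*} [Group G] [Group G'] [Fintype G] [Fintype G']
    (p : G → G → G' → G' → ℝ) : Prop :=
  IsWinningCorrelation p ∧ ∀ b d : G, (∑ a : G', ∑ c : G', p b d a c) = 1

/-- A `(G,G')`-invariant correlation: an element of `B̂(G,G')` whose values depend only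
on the quotients `b⁻¹ * d ∈ G` and `a⁻¹ * c ∈ G'`. -/
def IsInvariantCorrelation {G G' : Type*} [Group G] [Group G'] [Fintype G] [Fintype G']
    (p : G → G → G' → G' → ℝ) : Prop :=
  MemBhat p ∧
  ∀ (b d b' d' : G) (a c a' c' : G'),
    b⁻¹ * d = b'⁻¹ * d' → a⁻¹ * c = a'⁻¹ * c' → p b d a c = p b' d' a' c'

/-- The correlation `p_G`. -/
noncomputable def pUnif (G : Type*) [Group G] [Fintype G] : G → G → G → G → ℝ :=
  fun b d a c => if b⁻¹ * d = a⁻¹ * c then ((Fintype.card G : ℝ))⁻¹ else 0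

/-- Composition of correlations. -/
def corComp {G G' G'' : Type*} [Fintype G']
    (p₁ : G → G → G' → G' → ℝ) (p₂ : G' → G' → G'' → G'' → ℝ) :
    G → G → G'' → G'' → ℝ :=
  fun b d a c => ∑ x : G', ∑ y : G', p₁ b d x y * p₂ x y a c

/-- The correlation matrix `D^p` of a `(G,G')`-invariant correlation `p`:
`D^p_{x,y} = |G| ⬝ p(b,d|a,c)` for any `b,d,a,c` with `b⁻¹d = x`, `a⁻¹c = y`
(here realized with `b = a = e`). -/
noncomputable def corrMatrix {G G' : Type*} [Group G] [Group G'] [Fintype G]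
    (p : G → G → G' → G' → ℝ) : Matrix G G' ℝ :=
  Matrix.of fun x y => (Fintype.card G : ℝ) * p 1 x 1 y

/-- The deterministic correlation `p_π` associated with a bijection `π` from `G'` to `G`. -/
noncomputable def detCor {G G' : Type*} (π : G' ≃ G) : G → G → G' → G' → ℝ :=
  fun b d a c => if b = π a ∧ d = π c then 1 else 0

/-- The permutation matrix `P^π` of a bijection `π` from `G'` to `G`. -/
noncomputable def permMatrix {G G' : Type*} (π : G' ≃ G) : Matrix G G' ℝ :=
  Matrix.of fun x y => if x = π y then 1 else 0

/-- The matrix `D^π`: the correlation matrix of the `(G,G')`-invariant correlation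
`p_G ∘ p_π ∘ p_{G'}`. -/
noncomputable def Dpi {G G' : Type*} [Group G] [Group G'] [Fintype G] [Fintype G']
    (π : G' ≃ G) : Matrix G G' ℝ :=
  corrMatrix (corComp (pUnif G) (corComp (detCor π) (pUnif G')))

/-- `D^π = (1/|G|) ∑_{g ∈ G'} P^{τ_{π(g)⁻¹}} ⬝ P^π ⬝ P^{τ_g}`. -/
theorem stmt2 {G G' : Type*} [Group G] [Group G'] [Fintype G] [Fintype G']
    (hcard : Fintype.card G = Fintype.card G') (π : G' ≃ G) :
    Dpi π = (Fintype.card G : ℝ)⁻¹ •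
      ∑ g : G',
        permMatrix (Equiv.mulLeft ((π g)⁻¹) : G ≃ G) * permMatrix π *
          permMatrix (Equiv.mulLeft g : G' ≃ G') := by
  ext x y
  have hR : ∀ g : G', (permMatrix (Equiv.mulLeft ((π g)⁻¹) : G ≃ G) * permMatrix π *
      permMatrix (Equiv.mulLeft g : G' ≃ G')) x y
      = if π g * x = π (g * y) then (1:ℝ) else 0 := by
    intro g
    simp only [Matrix.mul_apply, permMatrix, Matrix.of_apply, Equiv.coe_mulLeft,
      ite_mul, mul_ite, one_mul, mul_one, zero_mul, mul_zero,
      Finset.sum_ite_eq', Finset.mem_univ, if_true]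
    simp [eq_inv_mul_iff_mul_eq]
    rw [Finset.sum_eq_single (g * y)]
    · simp
    · intro b _ hb
      simp [hb]
    · simp
  have key : ∀ s t : G, (∑ u : G', ∑ v : G',
      (if s = π u ∧ t = π v then (1:ℝ) else 0) *
        (if u⁻¹ * v = y then ((Fintype.card G' : ℝ))⁻¹ else 0))
      = if (π.symm s)⁻¹ * π.symm t = y then ((Fintype.card G' : ℝ))⁻¹ else 0 := by
    intro s t
    rw [Finset.sum_eq_single (π.symm s)]
    · rw [Finset.sum_eq_single (π.symm t)]
      · simp
      · intro v _ hv
        have : t ≠ π v := fun h => hv (by simp [h])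
        simp [this]
      · simp
    · intro u _ hu
      have : s ≠ π u := fun h => hu (by simp [h])
      simp [this]
    · simp
  have hL : Dpi π x y = (Fintype.card G' : ℝ)⁻¹ *
      ∑ g : G', (if π g * x = π (g * y) then (1:ℝ) else 0) := by
    simp only [Dpi, corrMatrix, corComp, pUnif, detCor, Matrix.of_apply, one_mul, inv_one]
    simp only [key]
    have h2 : ∀ s : G, (∑ t : G, (if x = s⁻¹ * t then ((Fintype.card G : ℝ))⁻¹ else 0) *
        (if (π.symm s)⁻¹ * π.symm t = y then ((Fintype.card G' : ℝ))⁻¹ else 0))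
        = ((Fintype.card G : ℝ))⁻¹ *
          (if (π.symm s)⁻¹ * π.symm (s * x) = y then ((Fintype.card G' : ℝ))⁻¹ else 0) := by
      intro s
      rw [Finset.sum_eq_single (s * x)]
      · simp
      · intro t _ ht
        have : x ≠ s⁻¹ * t := fun h => ht (by rw [h, mul_inv_cancel_left])
        simp [this]
      · simp
    simp only [h2]
    rw [← Finset.mul_sum,
      ← Equiv.sum_comp π (fun s => if (π.symm s)⁻¹ * π.symm (s * x) = y
        then ((Fintype.card G' : ℝ))⁻¹ else 0)]
    simp only [Equiv.symm_apply_apply, inv_mul_eq_iff_eq_mul, Equiv.symm_apply_eq]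
    simp only [Finset.mul_sum]
    refine Finset.sum_congr rfl fun g _ => ?_
    split
    · rw [← mul_assoc, mul_inv_cancel₀ (by exact_mod_cast Fintype.card_ne_zero : (Fintype.card G : ℝ) ≠ 0), one_mul, mul_one]
    · simp
  rw [hL]
  simp only [Matrix.smul_apply, Matrix.sum_apply, hR, smul_eq_mul, hcard]
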